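/- Let p be a prime, let m ≥ 2 and d ≥ 3 be integers with p ∤ m, let j be an integer with 1 ≤ j ≤ m−1, and set ℓ := j·p rem m. Define n_j := p − 1 − ⌊j·p/m⌋, d_j := d − ⌊d·j/m⌋ − 1, and d_ℓ := d − ⌊d·ℓ/m⌋ − 1. Then d·n_j − d_j·p + d_ℓ = p − 1 − ⌊((d·j) rem m)·p/m⌋. -/

import Mathlib

lemma stmt16_aux (p m d j : ℤ) (hm : 0 < m) :
    ((d * j) % m) * p / m
      = d * ((j * p) / m) - ((d * j) / m) * p + (d * (j * p % m)) / m := by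
  have h2 : ((d * j) % m) * p
      = d * (j * p % m) + m * (d * ((j * p) / m) - ((d * j) / m) * p) := by
    rw [Int.emod_def, Int.emod_def]; ring
  rw [h2, Int.add_mul_ediv_left _ _ (ne_of_gt hm)]
  ring

/-- Let `p` be prime, `m ≥ 2`, `d ≥ 3` with `p ∤ m`, `1 ≤ j ≤ m−1`,
and set `ℓ := j·p rem m`, `n_j := p − 1 − ⌊j·p/m⌋`, `d_j := d − ⌊d·j/m⌋ − 1`, and
`d_ℓ := d − ⌊d·ℓ/m⌋ − 1`.  Then
`d·n_j − d_j·p + d_ℓ = p − 1 − ⌊((d·j) rem m)·p/m⌋`. -/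
theorem stmt16 (p m d j : ℕ) (hp : p.Prime) (hm : 2 ≤ m) (hd : 3 ≤ d) (hpm : ¬ p ∣ m)
    (hj1 : 1 ≤ j) (hj2 : j ≤ m - 1) :
    (d : ℤ) * ((p - 1 - j * p / m : ℕ) : ℤ)
        - ((d - d * j / m - 1 : ℕ) : ℤ) * (p : ℤ)
        + ((d - d * (j * p % m) / m - 1 : ℕ) : ℤ)
      = (p : ℤ) - 1 - (((d * j % m) * p / m : ℕ) : ℤ) := by
  have hp0 : 0 < p := hp.pos
  have hm0 : 0 < m := by omega
  have hq : j * p / m + 1 ≤ p := by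
    have hjm : j < m := by omega
    have h1 : j * p / m < p := Nat.div_lt_of_lt_mul (by nlinarith)
    omega
  have hs : d * j / m + 1 ≤ d := by
    have hjm : j < m := by omega
    have h1 : d * j / m < d := Nat.div_lt_of_lt_mul (by nlinarith)
    omega
  have hlm : j * p % m < m := Nat.mod_lt _ hm0
  have hl : d * (j * p % m) / m + 1 ≤ d := by
    have h1 : d * (j * p % m) / m < d := Nat.div_lt_of_lt_mul (by nlinarith)
    omega
  have key := stmt16_aux (p : ℤ) (m : ℤ) (d : ℤ) (j : ℤ) (by exact_mod_cast hm0)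
  have c1 : ((p - 1 - j * p / m : ℕ) : ℤ) = (p : ℤ) - 1 - ((j * p / m : ℕ) : ℤ) := by
    have : j * p / m ≤ p - 1 := by omega
    push_cast [Nat.sub_sub, Nat.cast_sub (by omega : 1 + j * p / m ≤ p)]
    ring
  have c2 : ((d - d * j / m - 1 : ℕ) : ℤ) = (d : ℤ) - ((d * j / m : ℕ) : ℤ) - 1 := by
    push_cast [Nat.sub_sub, Nat.cast_sub (by omega : d * j / m + 1 ≤ d)]
    ring
  have c3 : ((d - d * (j * p % m) / m - 1 : ℕ) : ℤ)
      = (d : ℤ) - ((d * (j * p % m) / m : ℕ) : ℤ) - 1 := by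
    push_cast [Nat.sub_sub, Nat.cast_sub (by omega : d * (j * p % m) / m + 1 ≤ d)]
    ring
  rw [c1, c2, c3]
  have e1 : ((j * p / m : ℕ) : ℤ) = ((j : ℤ) * p) / m := by push_cast [Int.natCast_ediv]; ring_nf
  have e2 : ((d * j / m : ℕ) : ℤ) = ((d : ℤ) * j) / m := by push_cast [Int.natCast_ediv]; ring_nf
  have e3 : ((d * (j * p % m) / m : ℕ) : ℤ) = ((d : ℤ) * ((j : ℤ) * p % m)) / m := by
    push_cast [Int.natCast_ediv]; ring_nf
  have e4 : (((d * j % m) * p / m : ℕ) : ℤ) = (((d : ℤ) * j % m) * p) / m := by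
    push_cast [Int.natCast_ediv]; ring_nf
  rw [e1, e2, e3, e4, key]
  ring
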